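/- (Key identity in proof of Theorem 6.2) For the SI system with time-dependent τ, setting 𝓘(t) = ∫_{t₀}^t I(σ)dσ, one has S₀ exp(−∫_{t₀}^t τ(σ)I(σ)dσ) = I₀ + S₀ − I(t) − ν𝓘(t) for all t ≥ t₀, and consequently τ(t)I(t) = (I'(t) + νI(t)) / (I₀ + S₀ − I(t) − ν𝓘(t)) whenever the denominator is nonzero. -/

import Mathlib

open intervalIntegral

theorem stmt_9 (ν S₀ I₀ t₀ : ℝ) (hν : 0 < ν) (hS₀ : 0 < S₀) (hI₀ : 0 < I₀)
    (τ S I : ℝ → ℝ) (hτc : Continuous τ) (hIc : Continuous I)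
    (hS : ∀ t : ℝ, t₀ ≤ t → HasDerivAt S (-(τ t * S t * I t)) t)
    (hI : ∀ t : ℝ, t₀ ≤ t → HasDerivAt I (τ t * S t * I t - ν * I t) t)
    (hS0 : S t₀ = S₀) (hI0 : I t₀ = I₀) :
    ∀ t : ℝ, t₀ ≤ t →
      (S₀ * Real.exp (-∫ σ in t₀..t, τ σ * I σ)
          = I₀ + S₀ - I t - ν * ∫ σ in t₀..t, I σ) ∧
      ((I₀ + S₀ - I t - ν * ∫ σ in t₀..t, I σ) ≠ 0 →
        τ t * I t = ((τ t * S t * I t - ν * I t) + ν * I t) /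
          (I₀ + S₀ - I t - ν * ∫ σ in t₀..t, I σ)) := by
  have hτI : Continuous fun u => τ u * I u := hτc.mul hIc
  have hA : ∀ u : ℝ, HasDerivAt (fun u => ∫ σ in t₀..u, τ σ * I σ) (τ u * I u) u := by
    intro u
    exact intervalIntegral.integral_hasDerivAt_right (hτI.intervalIntegrable _ _)
      (hτI.stronglyMeasurable.stronglyMeasurableAtFilter) hτI.continuousAt
  have h𝓘 : ∀ u : ℝ, HasDerivAt (fun u => ∫ σ in t₀..u, I σ) (I u) u := by
    intro u
    exact intervalIntegral.integral_hasDerivAt_right (hIc.intervalIntegrable _ _)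
      (hIc.stronglyMeasurable.stronglyMeasurableAtFilter) hIc.continuousAt
  have hAcont : Continuous fun u => ∫ σ in t₀..u, τ σ * I σ := by
    exact intervalIntegral.continuous_primitive (fun a b => hτI.intervalIntegrable a b) t₀
  have h𝓘cont : Continuous fun u => ∫ σ in t₀..u, I σ := by
    exact intervalIntegral.continuous_primitive (fun a b => hIc.intervalIntegrable a b) t₀
  have hScont : ∀ u : ℝ, t₀ ≤ u → ContinuousAt S u := fun u hu => (hS u hu).continuousAt
  intro t ht
  have hFconst : S t * Real.exp (∫ σ in t₀..t, τ σ * I σ) = S₀ := by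
    have h := constant_of_has_deriv_right_zero
      (f := fun u => S u * Real.exp (∫ σ in t₀..u, τ σ * I σ)) (a := t₀) (b := t)
      (fun u hu => ((hScont u hu.1).continuousWithinAt.mul
        (Real.continuous_exp.comp hAcont).continuousAt.continuousWithinAt))
      (by
        intro u hu
        have hd : HasDerivAt (fun u => S u * Real.exp (∫ σ in t₀..u, τ σ * I σ)) 0 u := by
          have := (hS u hu.1).fun_mul ((hA u).exp)
          refine this.congr_deriv ?_
          ring
        exact hd.hasDerivWithinAt)
    have := h t (Set.right_mem_Icc.2 ht)
    simpa [hS0, intervalIntegral.integral_same] using this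
  have hGconst : S t + I t + ν * ∫ σ in t₀..t, I σ = S₀ + I₀ := by
    have h := constant_of_has_deriv_right_zero
      (f := fun u => S u + I u + ν * ∫ σ in t₀..u, I σ) (a := t₀) (b := t)
      (fun u hu => (((hScont u hu.1).continuousWithinAt.add
        hIc.continuousAt.continuousWithinAt).add
        ((continuous_const.mul h𝓘cont).continuousAt.continuousWithinAt)))
      (by
        intro u hu
        have hd : HasDerivAt (fun u => S u + I u + ν * ∫ σ in t₀..u, I σ) 0 u := by
          have := ((hS u hu.1).fun_add (hI u hu.1)).fun_add ((h𝓘 u).const_mul ν)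
          refine this.congr_deriv ?_
          ring
        exact hd.hasDerivWithinAt)
    have := h t (Set.right_mem_Icc.2 ht)
    simpa [hS0, hI0, intervalIntegral.integral_same] using this
  have hexp : Real.exp (∫ σ in t₀..t, τ σ * I σ) ≠ 0 := Real.exp_ne_zero _
  have hSt : S t = S₀ * Real.exp (-∫ σ in t₀..t, τ σ * I σ) := by
    rw [Real.exp_neg, ← hFconst]
    field_simp
  have hkey : S₀ * Real.exp (-∫ σ in t₀..t, τ σ * I σ)
      = I₀ + S₀ - I t - ν * ∫ σ in t₀..t, I σ := by
    rw [← hSt]; linarith [hGconst]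
  refine ⟨hkey, fun hne => ?_⟩
  have hSne : S t ≠ 0 := by rw [hSt, hkey]; exact hne
  rw [← hkey, ← hSt]
  field_simp
  ring
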